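/- Let 0 < α < 1, 𝔼 > 0, let 0 ≤ τ₁ < τ₂ < ... < τ_m be step application times with strain increments Δε₁, ..., Δε_m ∈ ℝ, and fix t > τ_m. For small δ > 0 (δ less than all gaps τ_{i+1} − τ_i and than t − τ_m) define ε_δ(s) = Σ_{i=1}^m Δε_i · r((s − τ_i)/δ), where r(x) = 0 for x ≤ 0, r(x) = x for 0 ≤ x ≤ 1, and r(x) = 1 for x ≥ 1. Then lim_{δ→0⁺} (𝔼/Γ(1−α)) ∫₀ᵗ ε_δ'(s)(t−s)^(−α) ds = Σ_{i=1}^m Δε_i · 𝔼 (t−τ_i)^(−α)/Γ(1−α); i.e., the Scott–Blair stress under consecutive step strains is the Boltzmann superposition of the relaxation responses G^SB(t−τ_i). -/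

import Mathlib

open MeasureTheory Set Filter Topology

/-- Derivative of the ramp function away from its two kinks. -/
lemma ramp_hasDerivAt (τ δ : ℝ) (hδ : 0 < δ) {s : ℝ} (h1 : s ≠ τ) (h2 : s ≠ τ + δ) :
    HasDerivAt (fun s' => max 0 (min 1 ((s' - τ) / δ)))
      (Set.indicator (Set.Ioo τ (τ + δ)) (fun _ => 1 / δ) s) s := by
  rcases lt_trichotomy s τ with h | h | h
  · have hind : Set.indicator (Set.Ioo τ (τ + δ)) (fun _ => (1:ℝ) / δ) s = 0 := by
      rw [Set.indicator_of_notMem]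
      simp only [Set.mem_Ioo, not_and]
      intro h'; linarith
    rw [hind]
    refine (hasDerivAt_const s (0:ℝ)).congr_of_eventuallyEq ?_
    filter_upwards [Iio_mem_nhds h] with s' hs'
    have hs' : s' < τ := hs'
    have hx : (s' - τ) / δ ≤ 0 :=
      div_nonpos_of_nonpos_of_nonneg (by linarith) hδ.le
    have : min 1 ((s' - τ) / δ) ≤ 0 := le_trans (min_le_right _ _) hx
    simp [max_eq_left this]
  · exact absurd h h1
  · rcases lt_trichotomy s (τ + δ) with h' | h' | h'
    · have hind : Set.indicator (Set.Ioo τ (τ + δ)) (fun _ => (1:ℝ) / δ) s = 1 / δ := by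
        rw [Set.indicator_of_mem (Set.mem_Ioo.mpr ⟨h, h'⟩)]
      rw [hind]
      have hd : HasDerivAt (fun s' : ℝ => (s' - τ) / δ) (1 / δ) s := by
        simpa using ((hasDerivAt_id s).sub_const τ).div_const δ
      refine hd.congr_of_eventuallyEq ?_
      filter_upwards [Ioo_mem_nhds h h'] with s' hs'
      have hx0 : 0 ≤ (s' - τ) / δ := div_nonneg (by linarith [hs'.1]) hδ.le
      have hx1 : (s' - τ) / δ ≤ 1 := by
        rw [div_le_one hδ]; linarith [hs'.2]
      rw [min_eq_right hx1, max_eq_right hx0]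
    · exact absurd h' h2
    · have hind : Set.indicator (Set.Ioo τ (τ + δ)) (fun _ => (1:ℝ) / δ) s = 0 := by
        rw [Set.indicator_of_notMem]
        simp only [Set.mem_Ioo, not_and]
        intro _; linarith
      rw [hind]
      refine (hasDerivAt_const s (1:ℝ)).congr_of_eventuallyEq ?_
      filter_upwards [Ioi_mem_nhds h'] with s' hs'
      have hs' : τ + δ < s' := hs'
      have hx1 : (1:ℝ) ≤ (s' - τ) / δ := by
        rw [le_div_iff₀ hδ]; linarith
      rw [min_eq_left hx1]
      simp

theorem scottBlair_boltzmann_superposition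
    (α 𝔼 : ℝ) (hα : 0 < α) (hα1 : α < 1) (h𝔼 : 0 < 𝔼)
    (m : ℕ) (hm : 0 < m) (τ Δε : Fin m → ℝ)
    (hτ0 : ∀ i, 0 ≤ τ i) (hτmono : StrictMono τ)
    (t : ℝ) (ht : ∀ i, τ i < t) :
    Tendsto
      (fun δ : ℝ =>
        (𝔼 / Real.Gamma (1 - α)) *
          ∫ s in (0:ℝ)..t,
            deriv (fun s' => ∑ i, Δε i * max 0 (min 1 ((s' - τ i) / δ))) s *
              (t - s) ^ (-α))
      (𝓝[>] (0:ℝ))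
      (𝓝 (∑ i, Δε i * (𝔼 * (t - τ i) ^ (-α) / Real.Gamma (1 - α)))) := by
  haveI : Nonempty (Fin m) := ⟨⟨0, hm⟩⟩
  have hne : (Finset.univ : Finset (Fin m)).Nonempty := Finset.univ_nonempty
  -- the limiting expression as a function of δ
  set L : ℝ → ℝ := fun δ =>
    (𝔼 / Real.Gamma (1 - α)) *
      ∑ i, Δε i * (1 / δ *
        (((t - τ i) ^ (1 - α) - (t - τ i - δ) ^ (1 - α)) / (1 - α))) with hL
  have hα' : (0:ℝ) < 1 - α := by linarith
  -- Step 1: eventual equality with L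
  have hev : ∀ᶠ δ in 𝓝[>] (0:ℝ),
      (𝔼 / Real.Gamma (1 - α)) *
          ∫ s in (0:ℝ)..t,
            deriv (fun s' => ∑ i, Δε i * max 0 (min 1 ((s' - τ i) / δ))) s *
              (t - s) ^ (-α) = L δ := by
    have hε : (0:ℝ) < Finset.univ.inf' hne (fun i => t - τ i) := by
      rw [Finset.lt_inf'_iff]
      intro i _
      linarith [ht i]
    have hmem : Set.Ioc (0:ℝ) (Finset.univ.inf' hne (fun i => t - τ i)) ∈ 𝓝[>] (0:ℝ) :=
      Ioc_mem_nhdsGT hε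
    filter_upwards [hmem] with δ hδmem
    obtain ⟨hδ, hδle⟩ := hδmem
    have hδt : ∀ i, τ i + δ ≤ t := by
      intro i
      have := le_trans hδle (Finset.inf'_le _ (Finset.mem_univ i))
      linarith
    -- kink set
    have hker : ∀ᵐ s : ℝ, ∀ i : Fin m, s ≠ τ i ∧ s ≠ τ i + δ := by
      have hnull : volume (⋃ i : Fin m, ({τ i, τ i + δ} : Set ℝ)) = 0 := by
        refine measure_iUnion_null fun i => ?_
        rw [Set.insert_eq]
        exact measure_union_null (measure_singleton _) (measure_singleton _)
      have hae : ∀ᵐ s : ℝ, s ∉ (⋃ i : Fin m, ({τ i, τ i + δ} : Set ℝ)) :=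
        (MeasureTheory.measure_eq_zero_iff_ae_notMem).mp hnull
      filter_upwards [hae] with s hs i
      simp only [Set.mem_iUnion, Set.mem_insert_iff, Set.mem_singleton_iff, not_exists,
        not_or] at hs
      exact hs i
    -- a.e. identify the integrand
    have haeq : ∀ᵐ s : ℝ, s ∈ Set.uIoc (0:ℝ) t →
        deriv (fun s' => ∑ i, Δε i * max 0 (min 1 ((s' - τ i) / δ))) s * (t - s) ^ (-α)
          = ∑ i, Δε i *
              Set.indicator (Set.Ioo (τ i) (τ i + δ)) (fun s => 1 / δ * (t - s) ^ (-α)) s := by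
      filter_upwards [hker] with s hs _
      have hd : HasDerivAt (fun s' => ∑ i, Δε i * max 0 (min 1 ((s' - τ i) / δ)))
          (∑ i, Δε i * Set.indicator (Set.Ioo (τ i) (τ i + δ)) (fun _ => 1 / δ) s) s := by
        refine HasDerivAt.fun_sum fun i _ => ?_
        exact (ramp_hasDerivAt (τ i) δ hδ (hs i).1 (hs i).2).const_mul (Δε i)
      rw [hd.deriv, Finset.sum_mul]
      refine Finset.sum_congr rfl fun i _ => ?_
      rw [mul_assoc]
      congr 1
      by_cases hmem : s ∈ Set.Ioo (τ i) (τ i + δ)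
      · rw [Set.indicator_of_mem hmem, Set.indicator_of_mem hmem]
      · rw [Set.indicator_of_notMem hmem, Set.indicator_of_notMem hmem, zero_mul]
    -- integrability of each summand
    have hint : ∀ i : Fin m, IntervalIntegrable
        (fun s => Δε i *
          Set.indicator (Set.Ioo (τ i) (τ i + δ)) (fun s => 1 / δ * (t - s) ^ (-α)) s)
        volume 0 t := by
      intro i
      refine IntervalIntegrable.const_mul ?_ _
      have hbase : IntervalIntegrable (fun s : ℝ => 1 / δ * (t - s) ^ (-α)) volume 0 t := by
        have h1 : IntervalIntegrable (fun x : ℝ => x ^ (-α)) volume t 0 :=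
          intervalIntegral.intervalIntegrable_rpow' (by linarith)
        have h2 := (h1.comp_sub_left t).const_mul (1 / δ)
        simpa using h2
      rw [intervalIntegrable_iff] at hbase ⊢
      exact hbase.indicator measurableSet_Ioo
    calc (𝔼 / Real.Gamma (1 - α)) *
          ∫ s in (0:ℝ)..t,
            deriv (fun s' => ∑ i, Δε i * max 0 (min 1 ((s' - τ i) / δ))) s * (t - s) ^ (-α)
        = (𝔼 / Real.Gamma (1 - α)) *
            ∫ s in (0:ℝ)..t, ∑ i, Δε i *
              Set.indicator (Set.Ioo (τ i) (τ i + δ)) (fun s => 1 / δ * (t - s) ^ (-α)) s := by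
          rw [intervalIntegral.integral_congr_ae haeq]
      _ = (𝔼 / Real.Gamma (1 - α)) *
            ∑ i, ∫ s in (0:ℝ)..t, Δε i *
              Set.indicator (Set.Ioo (τ i) (τ i + δ)) (fun s => 1 / δ * (t - s) ^ (-α)) s := by
          rw [intervalIntegral.integral_finset_sum fun i _ => hint i]
      _ = L δ := by
          rw [hL]
          congr 1
          refine Finset.sum_congr rfl fun i _ => ?_
          rw [intervalIntegral.integral_const_mul]
          congr 1
          -- compute the integral of the indicator
          have h0t : (0:ℝ) ≤ t := le_trans (hτ0 i) (ht i).le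
          rw [intervalIntegral.integral_of_le h0t,
            MeasureTheory.setIntegral_indicator measurableSet_Ioo]
          have hIcap : Set.Ioc (0:ℝ) t ∩ Set.Ioo (τ i) (τ i + δ) = Set.Ioo (τ i) (τ i + δ) := by
            refine Set.inter_eq_self_of_subset_right ?_
            intro x hx
            exact ⟨lt_of_le_of_lt (hτ0 i) hx.1, le_trans hx.2.le (hδt i)⟩
          rw [hIcap, ← MeasureTheory.integral_Ioc_eq_integral_Ioo,
            ← intervalIntegral.integral_of_le (by linarith : τ i ≤ τ i + δ),
            intervalIntegral.integral_const_mul]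
          congr 1
          have := intervalIntegral.integral_comp_sub_left (a := τ i) (b := τ i + δ)
            (fun x : ℝ => x ^ (-α)) t
          rw [this, integral_rpow (Or.inl (by linarith : (-1:ℝ) < -α))]
          have h1 : -α + 1 = 1 - α := by ring
          rw [h1]
          ring_nf
  -- Step 2: the limit of L
  have hlim : Tendsto L (𝓝[>] (0:ℝ))
      (𝓝 (∑ i, Δε i * (𝔼 * (t - τ i) ^ (-α) / Real.Gamma (1 - α)))) := by
    have hterm : ∀ i : Fin m, Tendsto
        (fun δ : ℝ => Δε i * (1 / δ *
          (((t - τ i) ^ (1 - α) - (t - τ i - δ) ^ (1 - α)) / (1 - α))))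
        (𝓝[>] (0:ℝ)) (𝓝 (Δε i * (t - τ i) ^ (-α))) := by
      intro i
      set c := t - τ i with hc
      have hc0 : 0 < c := by simp [hc]; linarith [ht i]
      have hF : HasDerivAt (fun δ : ℝ => (c - δ) ^ (1 - α)) (-((1 - α) * c ^ (-α))) 0 := by
        have h2 : HasDerivAt (fun δ : ℝ => c - δ) (-1) 0 := by
          simpa using (hasDerivAt_id (0:ℝ)).const_sub c
        have h3 := h2.rpow_const (p := 1 - α) (Or.inl (by simp [hc0.ne']))
        convert h3 using 1
        rw [sub_zero, show (1 - α - 1 : ℝ) = -α by ring]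
        ring
      have hslope := hasDerivAt_iff_tendsto_slope.mp hF
      have hmono : 𝓝[>] (0:ℝ) ≤ 𝓝[≠] (0:ℝ) :=
        nhdsWithin_mono 0 (fun x hx => ne_of_gt hx)
      have h3 : Tendsto (fun δ : ℝ => Δε i * (-(slope (fun δ : ℝ => (c - δ) ^ (1 - α)) 0 δ) / (1 - α)))
          (𝓝[>] (0:ℝ)) (𝓝 (Δε i * (c ^ (-α)))) := by
        have := ((hslope.mono_left hmono).neg.div_const (1 - α)).const_mul (Δε i)
        convert this using 2
        field_simp
      refine h3.congr' ?_
      filter_upwards [self_mem_nhdsWithin] with δ (hδ : 0 < δ)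
      rw [slope_def_field]
      have hδ0 : δ ≠ 0 := hδ.ne'
      field_simp
      simp only [sub_zero]
      ring
    have hsum : Tendsto
        (fun δ : ℝ => ∑ i, Δε i * (1 / δ *
          (((t - τ i) ^ (1 - α) - (t - τ i - δ) ^ (1 - α)) / (1 - α))))
        (𝓝[>] (0:ℝ)) (𝓝 (∑ i, Δε i * (t - τ i) ^ (-α))) :=
      tendsto_finset_sum _ fun i _ => hterm i
    have heq : (∑ i, Δε i * (𝔼 * (t - τ i) ^ (-α) / Real.Gamma (1 - α)))
        = (𝔼 / Real.Gamma (1 - α)) * ∑ i, Δε i * (t - τ i) ^ (-α) := by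
      rw [Finset.mul_sum]
      exact Finset.sum_congr rfl fun i _ => by ring
    rw [hL, heq]
    exact hsum.const_mul _
  exact Tendsto.congr' (hev.mono fun δ h => h.symm) hlim
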